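/- Let (S, L) be a total abstract cubic and let R be an admissible equivalence relation on S with quotient E = S/R and induced composition ∘. Assume that t_X ∘ t_Y ∘ t_{X∘Y} = t_{Y∘Y} as maps E → E for all X, Y ∈ E, where t_X(W) := X ∘ W. Then each t_X is an involutive bijection of E, and there exists a group homomorphism φ from the reflection group G_S to the group of permutations of E such that φ(t_x) = t_{[x]} for every x ∈ S, where [x] denotes the R-class of x; its image is the subgroup of permutations of E generated by {t_X : X ∈ E}. -/
import Mathlib


/-- The defining relators of the reflection group of an abstract cubic `(S, L)`:
`(t_x)^2` for all `x`, and `(t_x t_y t_z)^2` for all collinear triples `(x,y,z) ∈ L`. -/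
def cubicRels (S : Type*) (L : S → S → S → Prop) : Set (FreeGroup S) :=
  {r | (∃ x : S, r = FreeGroup.of x ^ 2) ∨
    ∃ x y z : S, L x y z ∧ r = (FreeGroup.of x * FreeGroup.of y * FreeGroup.of z) ^ 2}

/-- The reflection group `G_S` of an abstract cubic, as a presented group. -/
abbrev ReflGroup (S : Type*) (L : S → S → S → Prop) : Type _ :=
  PresentedGroup (cubicRels S L)

/-- The generator (reflection) `t_x` of the reflection group. -/
def tgen (S : Type*) (L : S → S → S → Prop) (x : S) : ReflGroup S L :=
  PresentedGroup.of x

/-- The approximating equivalence relations `≈_i` of §3: `≈_0` is equality, and `≈_{i+1}` is the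
transitive closure of the relation `∼_{i+1}` (see `simR`). -/
def approxR {S : Type*} (L : S → S → S → Prop) : ℕ → S → S → Prop
  | 0 => Eq
  | i + 1 => Relation.TransGen (fun x x' => x = x' ∨ ∃ u v u' v' : S,
      approxR L i u u' ∧ approxR L i v v' ∧ L u v x ∧ L u' v' x')

/-- The relations `∼_i` of §3: `∼_0` is equality, and `x ∼_{i+1} x'` iff `x = x'` or there are
`u ≈_i u'`, `v ≈_i v'` with `(u,v,x) ∈ L` and `(u',v',x') ∈ L`. -/
def simR {S : Type*} (L : S → S → S → Prop) : ℕ → S → S → Prop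
  | 0 => Eq
  | i + 1 => fun x x' => x = x' ∨ ∃ u v u' v' : S,
      approxR L i u u' ∧ approxR L i v v' ∧ L u v x ∧ L u' v' x'

/-- An equivalence relation `r` on `S` is admissible if on `S/r` the induced collinearity
relation `L/r` (three classes are collinear iff they contain representatives forming a
collinear triple) defines a composition: for all classes `X, Y` there is a unique class `Z`
with `(X,Y,Z) ∈ L/r`. -/
def AdmissibleRel {S : Type*} (L : S → S → S → Prop) (r : S → S → Prop) : Prop :=
  Equivalence r ∧
  ∀ x y : S, ∃ z : S,
    (∃ x' y' z' : S, r x x' ∧ r y y' ∧ r z z' ∧ L x' y' z') ∧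
    ∀ w : S, (∃ x' y' w' : S, r x x' ∧ r y y' ∧ r w w' ∧ L x' y' w') → r z w

/-- The set of generators of the subgroup `B₀ ⊆ G_S`: elements `t_a t_b t_c t_{a'} t_b t_{c'}`
for collinear triples `(a,b,c) ∈ L` and `(a',b,c') ∈ L` sharing the middle point `b`.
`B₀` itself is the normal closure of this set in `G_S`. -/
def B0Gens (S : Type*) (L : S → S → S → Prop) : Set (ReflGroup S L) :=
  {g | ∃ a b c a' c' : S, L a b c ∧ L a' b c' ∧
    g = tgen S L a * tgen S L b * tgen S L c * tgen S L a' * tgen S L b * tgen S L c'}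

/-- The subgroup `Bⁱ ⊆ G_S`: the normal closure of `{t_u t_{u'} : u ∼_i u'}`. -/
def Bn (S : Type*) (L : S → S → S → Prop) (i : ℕ) : Subgroup (ReflGroup S L) :=
  Subgroup.normalClosure {g | ∃ u u' : S, simR L i u u' ∧ g = tgen S L u * tgen S L u'}

/-- Lemma 4.3: let `R` (here `r`) be an admissible equivalence relation on `S`
with quotient `E = S/R` and induced composition `∘` (here `comp`), satisfying
`t_X ∘ t_Y ∘ t_{X∘Y} = t_{Y∘Y}` as maps `E → E`. Then each `t_X = comp X` is an involutive
bijection of `E`, and there is a group homomorphism `φ : G_S → Perm E` with `φ(t_x) = t_{[x]}`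
whose image is the subgroup generated by the permutations `t_X`, `X ∈ E`. -/
theorem stmt_14 {S : Type*} (L : S → S → S → Prop)
    (hsym₁ : ∀ x y z, L x y z → L y x z)
    (hsym₂ : ∀ x y z, L x y z → L x z y)
    (huniq : ∀ x y z z', L x y z → L x y z' → x ≠ y → z = z')
    (htotal : ∀ x y : S, ∃ z : S, L x y z)
    (r : S → S → Prop) (hadm : AdmissibleRel L r)
    (comp : Quotient (⟨r, hadm.1⟩ : Setoid S) → Quotient (⟨r, hadm.1⟩ : Setoid S) →
      Quotient (⟨r, hadm.1⟩ : Setoid S))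
    (hcomp : ∀ x y z : S, L x y z →
      comp (Quotient.mk ⟨r, hadm.1⟩ x) (Quotient.mk ⟨r, hadm.1⟩ y) =
        Quotient.mk ⟨r, hadm.1⟩ z)
    (hAb : ∀ X Y W, comp X (comp Y (comp (comp X Y) W)) = comp (comp Y Y) W) :
    (∀ X, Function.Involutive (comp X) ∧ Function.Bijective (comp X)) ∧
    ∃ φ : ReflGroup S L →* Equiv.Perm (Quotient (⟨r, hadm.1⟩ : Setoid S)),
      (∀ x : S, ⇑(φ (tgen S L x)) = comp (Quotient.mk ⟨r, hadm.1⟩ x)) ∧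
      φ.range = Subgroup.closure {e : Equiv.Perm (Quotient (⟨r, hadm.1⟩ : Setoid S)) |
        ∃ X, ⇑e = comp X} := by
  classical
  -- involutivity
  have hinv : ∀ X, Function.Involutive (comp X) := by
    intro X W
    obtain ⟨x, rfl⟩ := Quotient.exists_rep X
    obtain ⟨w, rfl⟩ := Quotient.exists_rep W
    obtain ⟨z, hz⟩ := htotal x w
    rw [hcomp x w z hz, hcomp x z w (hsym₂ _ _ _ hz)]
  have key : ∀ x y z : S, L x y z → ∀ W,
      comp (Quotient.mk (⟨r, hadm.1⟩ : Setoid S) x) (comp (Quotient.mk (⟨r, hadm.1⟩ : Setoid S) y) (comp (Quotient.mk (⟨r, hadm.1⟩ : Setoid S) z) W)) =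
        comp (comp (Quotient.mk (⟨r, hadm.1⟩ : Setoid S) y) (Quotient.mk (⟨r, hadm.1⟩ : Setoid S) y)) W := by
    intro x y z hz W
    have := hAb (Quotient.mk (⟨r, hadm.1⟩ : Setoid S) x) (Quotient.mk (⟨r, hadm.1⟩ : Setoid S) y) W
    rwa [hcomp x y z hz] at this
  refine ⟨fun X => ⟨hinv X, (hinv X).bijective⟩, ?_⟩
  set f : S → Equiv.Perm (Quotient (⟨r, hadm.1⟩ : Setoid S)) := fun x => (hinv (Quotient.mk (⟨r, hadm.1⟩ : Setoid S) x)).toPerm with hf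
  have hfapp : ∀ x : S, ⇑(f x) = comp (Quotient.mk (⟨r, hadm.1⟩ : Setoid S) x) := fun _ => rfl
  have hrel : ∀ ρ ∈ cubicRels S L, FreeGroup.lift f ρ = 1 := by
    rintro ρ (⟨x, rfl⟩ | ⟨x, y, z, hz, rfl⟩)
    · simp only [map_pow, FreeGroup.lift_apply_of]
      ext W
      rw [pow_two, Equiv.Perm.mul_apply, Equiv.Perm.one_apply, hfapp,
        hinv (Quotient.mk (⟨r, hadm.1⟩ : Setoid S) x) W]
    · simp only [map_pow, map_mul, FreeGroup.lift_apply_of]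
      ext W
      simp only [Equiv.Perm.coe_mul, Function.comp_apply, pow_two,
        Equiv.Perm.one_apply, hfapp]
      rw [key x y z hz, key x y z hz,
        hinv (comp (Quotient.mk (⟨r, hadm.1⟩ : Setoid S) y) (Quotient.mk (⟨r, hadm.1⟩ : Setoid S) y)) W]
  refine ⟨PresentedGroup.toGroup hrel, fun x => ?_, ?_⟩
  · rw [show tgen S L x = PresentedGroup.of x from rfl, PresentedGroup.toGroup.of]
    exact hfapp x
  · have hset : (PresentedGroup.toGroup hrel) ''
        Set.range (PresentedGroup.of : S → ReflGroup S L) =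
        {e : Equiv.Perm (Quotient (⟨r, hadm.1⟩ : Setoid S)) | ∃ X, ⇑e = comp X} := by
      ext e
      constructor
      · rintro ⟨g, ⟨x, rfl⟩, rfl⟩
        exact ⟨Quotient.mk (⟨r, hadm.1⟩ : Setoid S) x, by rw [PresentedGroup.toGroup.of]; exact hfapp x⟩
      · rintro ⟨X, hX⟩
        obtain ⟨x, rfl⟩ := Quotient.exists_rep X
        refine ⟨PresentedGroup.of x, ⟨x, rfl⟩, ?_⟩
        rw [PresentedGroup.toGroup.of]
        ext W
        rw [hfapp, ← hX]
    rw [MonoidHom.range_eq_map, ← PresentedGroup.closure_range_of (cubicRels S L),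
      MonoidHom.map_closure, hset]
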